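/- For every x ∈ ℝ, lim_{n→∞} n(1 − Φ(b_n + x/b_n)) = e^{−x} and lim_{n→∞} n Φ(−b_n + x/b_n) = e^{x}. -/

import Mathlib

open MeasureTheory ProbabilityTheory Filter Topology Real Set

/-- The standard normal density `φ`. -/
noncomputable def stdPDF (x : ℝ) : ℝ := (Real.sqrt (2 * Real.pi))⁻¹ * Real.exp (-x ^ 2 / 2)

/-- The standard normal distribution function `Φ`. -/
noncomputable def stdCDF (x : ℝ) : ℝ := ∫ t in Set.Iic x, stdPDF t

/-- Density of the standard bivariate Gaussian with correlation `ρ`. -/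
noncomputable def bvDensity (ρ x y : ℝ) : ℝ :=
  (2 * Real.pi * Real.sqrt (1 - ρ ^ 2))⁻¹ *
    Real.exp (-(x ^ 2 - 2 * ρ * x * y + y ^ 2) / (2 * (1 - ρ ^ 2)))

/-- The standard bivariate Gaussian measure on `ℝ × ℝ` (mean zero, unit variances,
correlation `ρ`). -/
noncomputable def bvGaussian (ρ : ℝ) : Measure (ℝ × ℝ) :=
  MeasureTheory.volume.withDensity fun p => ENNReal.ofReal (bvDensity ρ p.1 p.2)

/-- The standard Gumbel distribution function `Λ(x) = exp (-exp (-x))`. -/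
noncomputable def gumbel (x : ℝ) : ℝ := Real.exp (-Real.exp (-x))

lemma stdPDF_pos (x : ℝ) : 0 < stdPDF x := by
  have h : 0 < Real.sqrt (2 * Real.pi) := Real.sqrt_pos.2 (by positivity)
  exact mul_pos (inv_pos.2 h) (Real.exp_pos _)

lemma stdPDF_cont : Continuous stdPDF := by
  unfold stdPDF; fun_prop

lemma stdPDF_integrable : Integrable stdPDF := by
  have : Integrable (fun x : ℝ => Real.exp (-(1/2) * x ^ 2)) := integrable_exp_neg_mul_sq (by norm_num)
  have h := this.const_mul (Real.sqrt (2 * Real.pi))⁻¹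
  refine h.congr (Eventually.of_forall fun x => ?_)
  simp only [stdPDF]
  congr 1; ring

lemma stdPDF_total : ∫ x : ℝ, stdPDF x = 1 := by
  have h := integral_gaussian (1/2 : ℝ)
  rw [show (π / (1/2 : ℝ)) = 2 * π by ring] at h
  rw [show (fun x : ℝ => stdPDF x) = fun x => (Real.sqrt (2 * Real.pi))⁻¹ * Real.exp (-(1/2) * x ^ 2) by
      funext x; simp only [stdPDF]; congr 1; ring]
  rw [integral_const_mul, h, inv_mul_cancel₀ (by positivity)]

lemma tail_eq (y : ℝ) : 1 - stdCDF y = ∫ t in Set.Ioi y, stdPDF t := by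
  have h : (∫ t in Set.Iic y, stdPDF t) + ∫ t in Set.Ioi y, stdPDF t = 1 := by
    rw [← setIntegral_union (Iic_disjoint_Ioi le_rfl) measurableSet_Ioi
      stdPDF_integrable.integrableOn stdPDF_integrable.integrableOn,
      Iic_union_Ioi, ← stdPDF_total]
    rw [setIntegral_univ]
  unfold stdCDF; linarith

lemma tail_pos (y : ℝ) : 0 < ∫ t in Set.Ioi y, stdPDF t := by
  refine (setIntegral_pos_iff_support_of_nonneg_ae ?_ stdPDF_integrable.integrableOn).2 ?_
  · exact Eventually.of_forall fun t => (stdPDF_pos t).le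
  · have : (Function.support stdPDF) = Set.univ := by
      ext t; simp [Function.support, (stdPDF_pos t).ne']
    rw [this, Set.univ_inter, Real.volume_Ioi]
    simp

lemma stdPDF_hasDeriv (s : ℝ) : HasDerivAt (fun u => -stdPDF u) (s * stdPDF s) s := by
  have h1 : HasDerivAt (fun u : ℝ => -u ^ 2 / 2) (-s) s := by
    have := ((hasDerivAt_pow 2 s).neg).div_const 2
    simpa using this.congr_deriv (by ring)
  have h2 : HasDerivAt (fun u : ℝ => Real.exp (-u ^ 2 / 2)) (Real.exp (-s ^ 2 / 2) * (-s)) s :=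
    (Real.hasDerivAt_exp _).comp s h1
  have h3 := (h2.const_mul (Real.sqrt (2 * Real.pi))⁻¹).neg
  refine h3.congr_deriv ?_
  simp [stdPDF]; ring

lemma stdPDF_tendsto : Tendsto stdPDF atTop (𝓝 0) := by
  have h : Tendsto (fun s : ℝ => -s ^ 2 / 2) atTop atBot := by
    apply Tendsto.atBot_div_const (by norm_num)
    exact tendsto_neg_atBot_iff.mpr (tendsto_pow_atTop two_ne_zero)
  have := (Real.tendsto_exp_atBot.comp h).const_mul (Real.sqrt (2 * Real.pi))⁻¹
  unfold stdPDF
  simpa only [stdPDF, Function.comp_def, mul_zero] using this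

lemma moment_integrable (t : ℝ) : IntegrableOn (fun s => s * stdPDF s) (Set.Ioi t) := by
  have : Integrable (fun s : ℝ => (Real.sqrt (2 * Real.pi))⁻¹ * (s * Real.exp (-(1/2) * s ^ 2))) :=
    (integrable_mul_exp_neg_mul_sq (by norm_num : (0:ℝ) < 1/2)).const_mul _
  refine (this.congr (Eventually.of_forall fun s => ?_)).integrableOn
  simp only [stdPDF]; ring_nf

lemma moment_eq (t : ℝ) : ∫ s in Set.Ioi t, s * stdPDF s = stdPDF t := by
  have := integral_Ioi_of_hasDerivAt_of_tendsto (f := fun u => -stdPDF u)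
    (f' := fun s => s * stdPDF s) (a := t)
    (stdPDF_cont.neg.continuousWithinAt)
    (fun s _ => stdPDF_hasDeriv s) (moment_integrable t)
    (by simpa using stdPDF_tendsto.neg)
  simpa using this

lemma mills_upper {t : ℝ} (ht : 0 < t) : (∫ s in Set.Ioi t, stdPDF s) ≤ stdPDF t / t := by
  have h1 : (∫ s in Set.Ioi t, stdPDF s) ≤ ∫ s in Set.Ioi t, (s / t) * stdPDF s := by
    refine setIntegral_mono_on stdPDF_integrable.integrableOn
      ((moment_integrable t).div_const t |>.congr (Eventually.of_forall fun s => by ring))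
      measurableSet_Ioi (fun s hs => ?_)
    have hst : t ≤ s := (Set.mem_Ioi.1 hs).le
    exact le_mul_of_one_le_left (stdPDF_pos s).le ((one_le_div ht).2 hst)
  have h2 : (∫ s in Set.Ioi t, (s / t) * stdPDF s) = stdPDF t / t := by
    rw [show (fun s => (s / t) * stdPDF s) = fun s => (s * stdPDF s) / t by funext s; ring]
    rw [integral_div, moment_eq]
  linarith

lemma ratio_abs_le (s : ℝ) : |(s ^ 4 + 2 * s ^ 2 - 1) / (s ^ 2 + 1) ^ 2| ≤ 1 := by
  rw [abs_div, abs_of_pos (by positivity : (0:ℝ) < (s ^ 2 + 1) ^ 2)]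
  rw [div_le_one (by positivity)]
  have := abs_le.2 (⟨by nlinarith [sq_nonneg s, sq_nonneg (s^2)], by nlinarith [sq_nonneg s]⟩ :
    -( (s ^ 2 + 1) ^ 2) ≤ s ^ 4 + 2 * s ^ 2 - 1 ∧ s ^ 4 + 2 * s ^ 2 - 1 ≤ (s ^ 2 + 1) ^ 2)
  exact this

lemma g_hasDeriv (s : ℝ) :
    HasDerivAt (fun u => -(stdPDF u * (u / (u ^ 2 + 1))))
      (stdPDF s * ((s ^ 4 + 2 * s ^ 2 - 1) / (s ^ 2 + 1) ^ 2)) s := by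
  have hpdf : HasDerivAt stdPDF (-(s * stdPDF s)) s := by
    have := (stdPDF_hasDeriv s).neg
    simpa only [Pi.neg_def, neg_neg] using this
  have hden : HasDerivAt (fun u : ℝ => u ^ 2 + 1) (2 * s) s := by
    simpa using (hasDerivAt_pow 2 s).add_const 1
  have hq : HasDerivAt (fun u : ℝ => u / (u ^ 2 + 1))
      ((1 * (s ^ 2 + 1) - s * (2 * s)) / (s ^ 2 + 1) ^ 2) s :=
    (hasDerivAt_id s).div hden (by positivity)
  have h := (hpdf.mul hq).neg
  refine h.congr_deriv ?_
  have h1 : (s ^ 2 + 1) ≠ 0 := by positivity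
  field_simp
  ring

lemma g_tendsto : Tendsto (fun s : ℝ => -(stdPDF s * (s / (s ^ 2 + 1)))) atTop (𝓝 0) := by
  have hlo : Tendsto (fun s : ℝ => -stdPDF s) atTop (𝓝 0) := by simpa using stdPDF_tendsto.neg
  refine tendsto_of_tendsto_of_tendsto_of_le_of_le' hlo
    (tendsto_const_nhds (x := (0:ℝ))) ?_ ?_
  · filter_upwards [eventually_ge_atTop (0:ℝ)] with s hs
    have hr : s / (s ^ 2 + 1) ≤ 1 := by
      rw [div_le_one (by positivity)]; nlinarith
    have := mul_le_of_le_one_right (stdPDF_pos s).le hr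
    linarith
  · filter_upwards [eventually_ge_atTop (0:ℝ)] with s hs
    have hr : 0 ≤ s / (s ^ 2 + 1) := by positivity
    nlinarith [(stdPDF_pos s).le]

lemma gprime_integrable (t : ℝ) :
    IntegrableOn (fun s => stdPDF s * ((s ^ 4 + 2 * s ^ 2 - 1) / (s ^ 2 + 1) ^ 2)) (Set.Ioi t) := by
  refine Integrable.mono' stdPDF_integrable.integrableOn ?_ ?_
  · have hc : Continuous fun s : ℝ => stdPDF s * ((s ^ 4 + 2 * s ^ 2 - 1) / (s ^ 2 + 1) ^ 2) := by
      apply stdPDF_cont.mul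
      apply Continuous.div (by continuity) (by continuity)
      intro s; positivity
    exact hc.aestronglyMeasurable.restrict
  · refine Eventually.of_forall fun s => ?_
    rw [norm_mul, Real.norm_eq_abs, Real.norm_eq_abs, abs_of_pos (stdPDF_pos s)]
    calc stdPDF s * |(s ^ 4 + 2 * s ^ 2 - 1) / (s ^ 2 + 1) ^ 2|
        ≤ stdPDF s * 1 := by
          exact mul_le_mul_of_nonneg_left (ratio_abs_le s) (stdPDF_pos s).le
      _ = stdPDF s := mul_one _

lemma mills_lower (t : ℝ) : stdPDF t * (t / (t ^ 2 + 1)) ≤ ∫ s in Set.Ioi t, stdPDF s := by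
  have heq : (∫ s in Set.Ioi t, stdPDF s * ((s ^ 4 + 2 * s ^ 2 - 1) / (s ^ 2 + 1) ^ 2))
      = stdPDF t * (t / (t ^ 2 + 1)) := by
    have := integral_Ioi_of_hasDerivAt_of_tendsto
      (f := fun u => -(stdPDF u * (u / (u ^ 2 + 1))))
      (f' := fun s => stdPDF s * ((s ^ 4 + 2 * s ^ 2 - 1) / (s ^ 2 + 1) ^ 2)) (a := t)
      (by
        have hc : Continuous fun u : ℝ => -(stdPDF u * (u / (u ^ 2 + 1))) := by
          apply Continuous.neg; apply stdPDF_cont.mul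
          exact Continuous.div (by continuity) (by continuity) fun s => by positivity
        exact hc.continuousWithinAt)
      (fun s _ => g_hasDeriv s) (gprime_integrable t) g_tendsto
    rw [this]; ring
  rw [← heq]
  refine setIntegral_mono_on (gprime_integrable t) stdPDF_integrable.integrableOn
    measurableSet_Ioi (fun s _ => ?_)
  have h := (abs_le.1 (ratio_abs_le s)).2
  nlinarith [(stdPDF_pos s).le]

lemma stdCDF_neg (y : ℝ) : stdCDF (-y) = 1 - stdCDF y := by
  have heven : ∀ t : ℝ, stdPDF (-t) = stdPDF t := fun t => by simp [stdPDF]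
  have h1 : stdCDF (-y) = ∫ t in Set.Ioi y, stdPDF t := by
    unfold stdCDF
    rw [show (∫ t in Set.Iic (-y), stdPDF t) = ∫ t in Set.Iic (-y), stdPDF (-t) from
      setIntegral_congr_fun measurableSet_Iic fun t _ => (heven t).symm]
    rw [integral_comp_neg_Iic, neg_neg]
  rw [h1]; exact (tail_eq y).symm

lemma tail_antitone {a c : ℝ} (h : a ≤ c) :
    (∫ s in Set.Ioi c, stdPDF s) ≤ ∫ s in Set.Ioi a, stdPDF s := by
  apply setIntegral_mono_set stdPDF_integrable.integrableOn
    (Eventually.of_forall fun s => (stdPDF_pos s).le)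
  exact Eventually.of_forall (Set.Ioi_subset_Ioi h)

lemma b_tendsto (b : ℕ → ℝ) (hb : ∀ n : ℕ, 2 ≤ n → 1 - stdCDF (b n) = 1 / (n : ℝ)) :
    Tendsto b atTop atTop := by
  rw [tendsto_atTop]
  intro M
  have hε : 0 < ∫ s in Set.Ioi M, stdPDF s := tail_pos M
  have h1 : Tendsto (fun n : ℕ => 1 / (n : ℝ)) atTop (𝓝 0) := by
    simpa using tendsto_one_div_atTop_nhds_zero_nat (𝕜 := ℝ)
  have h2 : ∀ᶠ n : ℕ in atTop, 1 / (n : ℝ) < ∫ s in Set.Ioi M, stdPDF s :=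
    (h1.eventually_lt_const hε)
  filter_upwards [h2, eventually_ge_atTop 2] with n hn h2n
  by_contra hcon
  push_neg at hcon
  have h3 := tail_antitone hcon.le
  rw [show (∫ s in Set.Ioi (b n), stdPDF s) = 1 / (n : ℝ) from by
    rw [← tail_eq]; exact hb n h2n] at h3
  linarith

lemma hu_lim : Tendsto (fun t : ℝ => (t ^ 2)⁻¹) atTop (𝓝 0) :=
  tendsto_inv_atTop_zero.comp (tendsto_pow_atTop two_ne_zero)

lemma hexp_lim (x : ℝ) :
    Tendsto (fun t : ℝ => Real.exp (-x - x ^ 2 / (2 * t ^ 2))) atTop (𝓝 (Real.exp (-x))) := by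
  have h1 : Tendsto (fun t : ℝ => -x - x ^ 2 / 2 * (t ^ 2)⁻¹) atTop (𝓝 (-x)) := by
    have := tendsto_const_nhds (x := (-x : ℝ)) (f := atTop (α := ℝ)) |>.sub
      ((hu_lim).const_mul (x ^ 2 / 2))
    simpa using this
  have h2 := (Real.continuous_exp.tendsto (-x)).comp h1
  refine h2.congr fun t => ?_
  simp only [Function.comp]
  congr 1
  ring

lemma hratU_lim (x : ℝ) :
    Tendsto (fun t : ℝ => (t ^ 2 + 1) / (t ^ 2 + x)) atTop (𝓝 1) := by
  have h : Tendsto (fun t : ℝ => (1 + (t ^ 2)⁻¹) / (1 + x * (t ^ 2)⁻¹)) atTop (𝓝 1) := by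
    have := (tendsto_const_nhds (x := (1:ℝ)).add hu_lim).div
      (tendsto_const_nhds (x := (1:ℝ)).add (hu_lim.const_mul x)) (by norm_num)
    simpa [Pi.div_def] using this
  refine Tendsto.congr' ?_ h
  filter_upwards [eventually_ge_atTop (1 + |x|)] with t ht
  have hx1 : -|x| ≤ x := neg_abs_le x
  have hx2 : x ≤ |x| := le_abs_self x
  have hax : 0 ≤ |x| := abs_nonneg x
  have ht1 : (1:ℝ) ≤ t := by linarith
  have ht0 : (0:ℝ) < t := by linarith
  have htsq : t ≤ t ^ 2 := by nlinarith
  have hden : (0:ℝ) < t ^ 2 + x := by nlinarith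
  have ht2 : (0:ℝ) < t ^ 2 := by positivity
  have hden1 : (0:ℝ) < 1 + x * (t ^ 2)⁻¹ := by
    have : 1 + x * (t ^ 2)⁻¹ = (t ^ 2 + x) / t ^ 2 := by field_simp
    rw [this]; positivity
  rw [div_eq_div_iff hden1.ne' hden.ne']
  field_simp

lemma hratL_lim (x : ℝ) :
    Tendsto (fun t : ℝ => (t ^ 2 + x) / (t ^ 2 + 2 * x + x ^ 2 / t ^ 2 + 1)) atTop (𝓝 1) := by
  have h : Tendsto (fun t : ℝ =>
      (1 + x * (t ^ 2)⁻¹) / (1 + (2 * x + 1) * (t ^ 2)⁻¹ + x ^ 2 * ((t ^ 2)⁻¹) ^ 2))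
      atTop (𝓝 1) := by
    have := (tendsto_const_nhds (x := (1:ℝ)).add (hu_lim.const_mul x)).div
      ((tendsto_const_nhds (x := (1:ℝ)).add (hu_lim.const_mul (2 * x + 1))).add
        ((hu_lim.pow 2).const_mul (x ^ 2))) (by norm_num)
    simpa [Pi.div_def] using this
  refine Tendsto.congr' ?_ h
  filter_upwards [eventually_ge_atTop (1 + |x|)] with t ht
  have hx1 : -|x| ≤ x := neg_abs_le x
  have hx2 : x ≤ |x| := le_abs_self x
  have hax : 0 ≤ |x| := abs_nonneg x
  have ht1 : (1:ℝ) ≤ t := by linarith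
  have ht0 : (0:ℝ) < t := by linarith
  have ht2 : (0:ℝ) < t ^ 2 := by positivity
  have hc : t ^ 2 + 2 * x + x ^ 2 / t ^ 2 + 1 = (t + x / t) ^ 2 + 1 := by
    field_simp; ring
  have hden : (0:ℝ) < t ^ 2 + 2 * x + x ^ 2 / t ^ 2 + 1 := by rw [hc]; positivity
  have hden2 : (0:ℝ) < 1 + (2 * x + 1) * (t ^ 2)⁻¹ + x ^ 2 * ((t ^ 2)⁻¹) ^ 2 := by
    have : 1 + (2 * x + 1) * (t ^ 2)⁻¹ + x ^ 2 * ((t ^ 2)⁻¹) ^ 2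
        = (t ^ 2 + 2 * x + x ^ 2 / t ^ 2 + 1) / t ^ 2 := by field_simp; ring
    rw [this]; positivity
  rw [div_eq_div_iff hden2.ne' hden.ne']
  field_simp
  ring

lemma phi_ratio {x t : ℝ} (ht : t ≠ 0) :
    stdPDF (t + x / t) / stdPDF t = Real.exp (-x - x ^ 2 / (2 * t ^ 2)) := by
  unfold stdPDF
  rw [mul_div_mul_left _ _ (by positivity : (Real.sqrt (2 * Real.pi))⁻¹ ≠ 0)]
  rw [← Real.exp_sub]
  congr 1
  field_simp
  ring

lemma ratio_bounds (x t : ℝ) (ht : 1 + |x| ≤ t) :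
    Real.exp (-x - x ^ 2 / (2 * t ^ 2)) * ((t ^ 2 + x) / (t ^ 2 + 2 * x + x ^ 2 / t ^ 2 + 1))
      ≤ (∫ s in Set.Ioi (t + x / t), stdPDF s) / (∫ s in Set.Ioi t, stdPDF s) ∧
    (∫ s in Set.Ioi (t + x / t), stdPDF s) / (∫ s in Set.Ioi t, stdPDF s)
      ≤ Real.exp (-x - x ^ 2 / (2 * t ^ 2)) * ((t ^ 2 + 1) / (t ^ 2 + x)) := by
  have hx1 : -|x| ≤ x := neg_abs_le x
  have hx2 : x ≤ |x| := le_abs_self x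
  have hax : 0 ≤ |x| := abs_nonneg x
  have ht1 : (1:ℝ) ≤ t := by linarith
  have ht0 : (0:ℝ) < t := by linarith
  have ht2 : (0:ℝ) < t ^ 2 := by positivity
  set c := t + x / t with hcdef
  have hc1 : (1:ℝ) ≤ c := by
    rw [hcdef, ← sub_nonneg]
    have h : t + x / t - 1 = (t ^ 2 + x - t) / t := by field_simp
    rw [h]
    apply div_nonneg _ ht0.le
    nlinarith [mul_le_mul ht1 (by linarith : |x| ≤ t - 1) hax (by linarith : (0:ℝ) ≤ t)]
  have hc0 : (0:ℝ) < c := by linarith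
  have hct : c * t = t ^ 2 + x := by rw [hcdef]; field_simp
  have hcc : c ^ 2 + 1 = t ^ 2 + 2 * x + x ^ 2 / t ^ 2 + 1 := by
    rw [hcdef]; field_simp; ring
  have hphi := phi_ratio (x := x) (t := t) ht0.ne'
  have hTc_pos := tail_pos c
  have hTt_pos := tail_pos t
  have hphit := stdPDF_pos t
  have hphic := stdPDF_pos c
  constructor
  · -- lower bound
    have h1 : stdPDF c * (c / (c ^ 2 + 1)) ≤ ∫ s in Set.Ioi c, stdPDF s := mills_lower c
    have h2 : (∫ s in Set.Ioi t, stdPDF s) ≤ stdPDF t / t := mills_upper ht0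
    have h3 : (stdPDF c * (c / (c ^ 2 + 1))) / (stdPDF t / t)
        ≤ (∫ s in Set.Ioi c, stdPDF s) / (∫ s in Set.Ioi t, stdPDF s) :=
      div_le_div₀ hTc_pos.le h1 hTt_pos h2
    refine le_trans (le_of_eq ?_) h3
    rw [← hcc, ← hct]
    rw [show Real.exp (-x - x ^ 2 / (2 * t ^ 2)) = stdPDF c / stdPDF t from hphi.symm]
    field_simp
  · -- upper bound
    have h1 : (∫ s in Set.Ioi c, stdPDF s) ≤ stdPDF c / c := mills_upper hc0
    have h2 : stdPDF t * (t / (t ^ 2 + 1)) ≤ ∫ s in Set.Ioi t, stdPDF s := mills_lower t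
    have h3 : (∫ s in Set.Ioi c, stdPDF s) / (∫ s in Set.Ioi t, stdPDF s)
        ≤ (stdPDF c / c) / (stdPDF t * (t / (t ^ 2 + 1))) :=
      div_le_div₀ (div_nonneg hphic.le hc0.le) h1 (mul_pos hphit (div_pos ht0 (by positivity))) h2
    refine le_trans h3 (le_of_eq ?_)
    rw [← hct]
    rw [show Real.exp (-x - x ^ 2 / (2 * t ^ 2)) = stdPDF c / stdPDF t from hphi.symm]
    field_simp

lemma key_lim (b : ℕ → ℝ)
    (hb : ∀ n : ℕ, 2 ≤ n → 1 - stdCDF (b n) = 1 / (n : ℝ)) (x : ℝ) :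
    Tendsto (fun n : ℕ => (n : ℝ) * (1 - stdCDF (b n + x / b n))) atTop
      (𝓝 (Real.exp (-x))) := by
  have hbt := b_tendsto b hb
  have hLlim : Tendsto (fun n : ℕ => Real.exp (-x - x ^ 2 / (2 * (b n) ^ 2)) *
      (((b n) ^ 2 + x) / ((b n) ^ 2 + 2 * x + x ^ 2 / (b n) ^ 2 + 1))) atTop
      (𝓝 (Real.exp (-x))) := by
    have := ((hexp_lim x).mul (hratL_lim x)).comp hbt
    rw [mul_one] at this
    exact this.congr fun n => by simp [Function.comp]
  have hUlim : Tendsto (fun n : ℕ => Real.exp (-x - x ^ 2 / (2 * (b n) ^ 2)) *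
      (((b n) ^ 2 + 1) / ((b n) ^ 2 + x))) atTop (𝓝 (Real.exp (-x))) := by
    have := ((hexp_lim x).mul (hratU_lim x)).comp hbt
    rw [mul_one] at this
    exact this.congr fun n => by simp [Function.comp]
  have hev : ∀ᶠ n : ℕ in atTop, 1 + |x| ≤ b n ∧ 2 ≤ n := by
    filter_upwards [hbt.eventually_ge_atTop (1 + |x|), eventually_ge_atTop 2] with n h1 h2
    exact ⟨h1, h2⟩
  have heq : ∀ᶠ n : ℕ in atTop, (n : ℝ) * (1 - stdCDF (b n + x / b n))
      = (∫ s in Set.Ioi (b n + x / b n), stdPDF s) / (∫ s in Set.Ioi (b n), stdPDF s) := by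
    filter_upwards [hev] with n ⟨_, h2n⟩
    have hTt : (∫ s in Set.Ioi (b n), stdPDF s) = 1 / (n : ℝ) := by
      rw [← tail_eq]; exact hb n h2n
    have hnpos : (0:ℝ) < (n : ℝ) := by positivity
    rw [tail_eq, hTt]
    field_simp
  refine tendsto_of_tendsto_of_tendsto_of_le_of_le' hLlim hUlim ?_ ?_
  · filter_upwards [hev, heq] with n ⟨ht, _⟩ he
    rw [he]
    exact (ratio_bounds x (b n) ht).1
  · filter_upwards [hev, heq] with n ⟨ht, _⟩ he
    rw [he]
    exact (ratio_bounds x (b n) ht).2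

/-- For the norming constants `b n` defined by `1 - Φ(b n) = 1/n`:
`n (1 - Φ(b n + x / b n)) → e^{-x}` and `n Φ(-b n + x / b n) → e^{x}`. -/
theorem norming_constants_limits
    (b : ℕ → ℝ) (hbpos : ∀ n : ℕ, 2 ≤ n → 0 < b n)
    (hb : ∀ n : ℕ, 2 ≤ n → 1 - stdCDF (b n) = 1 / (n : ℝ))
    (x : ℝ) :
    Tendsto (fun n : ℕ => (n : ℝ) * (1 - stdCDF (b n + x / b n))) atTop (𝓝 (Real.exp (-x))) ∧
    Tendsto (fun n : ℕ => (n : ℝ) * stdCDF (-b n + x / b n)) atTop (𝓝 (Real.exp x)) := by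
  have h2 := key_lim b hb (-x)
  rw [neg_neg] at h2
  refine ⟨key_lim b hb x, h2.congr fun n => ?_⟩
  congr 1
  rw [show -b n + x / b n = -(b n + -x / b n) by ring, stdCDF_neg]
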